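/- For z in ℂ with 0 < Re z < 1 or z off the real axis near (0,1), with arccos defined by arccos z = ∫_z^1 ds/((1−s)^{1/2}(1+s)^{1/2}) on ℂ\((−∞,−1]∪[1,∞)), the conformal map φ(z) = 2(z−1/2)+2z^{1/2}(z−1)^{1/2} satisfies φ(z) = e^{i·arccos(2z−1)} for z in the upper half-plane. -/

import Mathlib

/-- The conformal map `φ(z) = 2(z - 1/2) + 2 z^{1/2}(z-1)^{1/2}` (principal branches). -/
noncomputable def phiMap (z : ℂ) : ℂ :=
  2 * (z - 1/2) + 2 * z ^ ((1:ℂ)/2) * (z - 1) ^ ((1:ℂ)/2)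

/-- The complex `arccos`, defined by
`arccos w = ∫_w^1 ds/((1-s)^{1/2}(1+s)^{1/2})`, the integral taken along the
straight segment from `w` to `1`. -/
noncomputable def arccosC (w : ℂ) : ℂ :=
  (1 - w) * ∫ t in (0:ℝ)..1,
    ((1 - (w + t * (1 - w))) ^ ((1:ℂ)/2) * (1 + (w + t * (1 - w))) ^ ((1:ℂ)/2))⁻¹

open Complex

lemma sqrt_re_im {w : ℂ} (hw : w ≠ 0) :
    (w ^ ((1:ℂ)/2)).re = Real.exp (Real.log ‖w‖ / 2) * Real.cos (w.arg / 2) ∧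
    (w ^ ((1:ℂ)/2)).im = Real.exp (Real.log ‖w‖ / 2) * Real.sin (w.arg / 2) := by
  rw [Complex.cpow_def_of_ne_zero hw]
  rw [Complex.exp_re, Complex.exp_im]
  constructor <;> · congr 2 <;> simp [Complex.log_re, Complex.log_im] <;> ring

lemma arg_half_mem {w : ℂ} (hw : w.im ≠ 0) :
    -(Real.pi/2) < w.arg / 2 ∧ w.arg / 2 < Real.pi/2 ∧ w.arg / 2 ≠ 0 := by
  have h1 := Complex.neg_pi_lt_arg w
  have h2 := Complex.arg_le_pi w
  have h3 : w.arg ≠ Real.pi := fun h => by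
    have := Complex.arg_eq_pi_iff.mp h; exact hw this.2
  have h4 : w.arg ≠ 0 := fun h => by
    have := Complex.arg_eq_zero_iff.mp h; exact hw this.2
  refine ⟨by linarith, by rcases lt_or_eq_of_le h2 with h|h; · linarith
                          · exact absurd h h3, by simpa using h4⟩

lemma sqrt_re_pos {w : ℂ} (hw : w.im ≠ 0) : 0 < (w ^ ((1:ℂ)/2)).re := by
  have hw0 : w ≠ 0 := fun h => by simp [h] at hw
  rw [(sqrt_re_im hw0).1]
  have h := arg_half_mem hw
  exact mul_pos (Real.exp_pos _) (Real.cos_pos_of_mem_Ioo ⟨h.1, h.2.1⟩)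

lemma sqrt_im_pos {w : ℂ} (hw : 0 < w.im) : 0 < (w ^ ((1:ℂ)/2)).im := by
  have hw0 : w ≠ 0 := fun h => by simp [h] at hw
  rw [(sqrt_re_im hw0).2]
  have h0 : 0 ≤ w.arg := Complex.arg_nonneg_iff.mpr hw.le
  have h := arg_half_mem (w := w) hw.ne'
  refine mul_pos (Real.exp_pos _) (Real.sin_pos_of_pos_of_lt_pi ?_ ?_)
  · rcases h0.lt_or_eq with h1|h1
    · positivity
    · exact absurd (by simpa using h1.symm) h.2.2
  · have := Real.pi_pos; linarith [h.2.1]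

lemma sqrt_im_neg {w : ℂ} (hw : w.im < 0) : (w ^ ((1:ℂ)/2)).im < 0 := by
  have hw0 : w ≠ 0 := fun h => by simp [h] at hw
  rw [(sqrt_re_im hw0).2]
  have h0 : w.arg < 0 := Complex.arg_neg_iff.mpr hw
  have h := arg_half_mem (w := w) hw.ne
  have : Real.sin (w.arg/2) < 0 := by
    apply Real.sin_neg_of_neg_of_neg_pi_lt (by linarith) (by linarith [h.1])
  nlinarith [Real.exp_pos (Real.log ‖w‖ / 2)]

lemma sqrt_sq {w : ℂ} (hw : w ≠ 0) : w ^ ((1:ℂ)/2) * w ^ ((1:ℂ)/2) = w := by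
  rw [← Complex.cpow_add _ _ hw]; norm_num

lemma sqrt_eq_of_sq_eq {a b : ℂ} (h : a * a = b * b) (ha : 0 < a.re) (hb : 0 < b.re) : a = b := by
  have : (a - b) * (a + b) = 0 := by ring_nf; linear_combination h
  rcases mul_eq_zero.mp this with h1|h1
  · exact sub_eq_zero.mp h1
  · exfalso
    have : (a + b).re = 0 := by rw [h1]; simp
    simp [Complex.add_re] at this; linarith

noncomputable def hAux (s : ℂ) : ℂ :=
  s + Complex.I * ((1 - s) ^ ((1:ℂ)/2) * (1 + s) ^ ((1:ℂ)/2))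

lemma im_one_sub {s : ℂ} (hs : 0 < s.im) : (1 - s).im < 0 := by simp [Complex.sub_im]; linarith
lemma im_one_add {s : ℂ} (hs : 0 < s.im) : 0 < (1 + s).im := by simp [Complex.add_im]; linarith

lemma prod_sqrt_re_pos {s : ℂ} (hs : 0 < s.im) :
    0 < (((1 - s) ^ ((1:ℂ)/2)) * ((1 + s) ^ ((1:ℂ)/2))).re := by
  have h1 := im_one_sub hs
  have h2 := im_one_add hs
  have hu_re := sqrt_re_pos (w := 1 - s) h1.ne
  have hv_re := sqrt_re_pos (w := 1 + s) h2.ne'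
  have hu_im := sqrt_im_neg (w := 1 - s) h1
  have hv_im := sqrt_im_pos (w := 1 + s) h2
  rw [Complex.mul_re]
  nlinarith

lemma hAux_im_pos {s : ℂ} (hs : 0 < s.im) : 0 < (hAux s).im := by
  have := prod_sqrt_re_pos hs
  simp only [hAux, Complex.add_im, Complex.mul_im, Complex.I_re, Complex.I_im]
  simp only [zero_mul, one_mul]
  linarith

lemma hAux_slit {s : ℂ} (hs : 0 < s.im) : hAux s ∈ Complex.slitPlane :=
  Complex.mem_slitPlane_iff.mpr (Or.inr (hAux_im_pos hs).ne')

lemma hAux_ne_zero {s : ℂ} (hs : 0 < s.im) : hAux s ≠ 0 :=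
  fun h => by simpa [h] using (hAux_im_pos hs)

lemma hasDerivAt_key {s : ℂ} (hs : 0 < s.im) :
    HasDerivAt (fun s : ℂ => Complex.I * Complex.log (hAux s))
      (((1 - s) ^ ((1:ℂ)/2) * (1 + s) ^ ((1:ℂ)/2))⁻¹) s := by
  set u : ℂ := (1 - s) ^ ((1:ℂ)/2) with hu_def
  set v : ℂ := (1 + s) ^ ((1:ℂ)/2) with hv_def
  have h1 := im_one_sub hs
  have h2 := im_one_add hs
  have h1' : (1 - s) ≠ 0 := fun h => by simp [h] at h1
  have h2' : (1 + s) ≠ 0 := fun h => by simp [h] at h2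
  have hu0 : u ≠ 0 := fun h => by have := sqrt_re_pos (w := 1 - s) h1.ne; rw [← hu_def, h] at this; simp at this
  have hv0 : v ≠ 0 := fun h => by have := sqrt_re_pos (w := 1 + s) h2.ne'; rw [← hv_def, h] at this; simp at this
  have hu_sq : u * u = 1 - s := sqrt_sq h1'
  have hv_sq : v * v = 1 + s := sqrt_sq h2'
  -- derivative of u
  have du : HasDerivAt (fun s : ℂ => (1 - s) ^ ((1:ℂ)/2)) (-(1/2) * u⁻¹) s := by
    have hd : HasDerivAt (fun s : ℂ => 1 - s) (-1) s := by
      simpa using (hasDerivAt_id s).const_sub 1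
    have := hd.cpow_const (c := (1:ℂ)/2)
      (Complex.mem_slitPlane_iff.mpr (Or.inr h1.ne))
    convert this using 1
    rw [show (1:ℂ)/2 - 1 = -(1/2) by norm_num, Complex.cpow_neg, ← hu_def]
    ring
  -- derivative of v
  have dv : HasDerivAt (fun s : ℂ => (1 + s) ^ ((1:ℂ)/2)) ((1/2) * v⁻¹) s := by
    have hd : HasDerivAt (fun s : ℂ => 1 + s) 1 s := by
      simpa using (hasDerivAt_id s).const_add 1
    have := hd.cpow_const (c := (1:ℂ)/2)
      (Complex.mem_slitPlane_iff.mpr (Or.inr h2.ne'))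
    convert this using 1
    rw [show (1:ℂ)/2 - 1 = -(1/2) by norm_num, Complex.cpow_neg, ← hv_def]
    ring
  have dh : HasDerivAt hAux (1 + Complex.I * (-(1/2) * u⁻¹ * v + u * ((1/2) * v⁻¹))) s := by
    have h' := (hasDerivAt_id s).add ((du.mul dv).const_mul Complex.I)
    exact h'
  have dlog := (dh.clog (hAux_slit hs)).const_mul Complex.I
  refine dlog.congr_deriv (Eq.symm ?_)
  set X : ℂ := -(1/2) * u⁻¹ * v + u * ((1/2) * v⁻¹) with hX_def
  have hne : s + Complex.I * (u * v) ≠ 0 := by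
    have := hAux_ne_zero hs
    rw [hAux, ← hu_def, ← hv_def] at this
    exact this
  have hX : X * (u * v) = (1/2) * (u * u) - (1/2) * (v * v) := by
    rw [hX_def]; field_simp; ring
  have hI : Complex.I * Complex.I = -1 := Complex.I_mul_I
  have key : Complex.I * (1 + Complex.I * X) * (u * v) = s + Complex.I * (u * v) := by
    linear_combination (Complex.I * Complex.I) * hX + ((1/2) * (u * u) - (1/2) * (v * v)) * hI - (1/2) * hu_sq + (1/2) * hv_sq
  have hval : hAux s = s + Complex.I * (u * v) := by rw [hAux, ← hu_def, ← hv_def]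
  rw [hval]
  have huv : u * v ≠ 0 := mul_ne_zero hu0 hv0
  rw [← mul_div_assoc, eq_div_iff hne, ← key, mul_comm, mul_assoc, mul_inv_cancel₀ huv, mul_one]

lemma half_ne_zero' : ((1:ℂ)/2) ≠ 0 := by norm_num

lemma sqrt_ne_zero {x : ℂ} (hx : x ≠ 0) : x ^ ((1:ℂ)/2) ≠ 0 := by
  simp [Complex.cpow_eq_zero_iff, hx]

lemma ofReal_mul_sqrt {r : ℝ} (hr : 0 ≤ r) {x : ℂ} (hx : x.im ≠ 0) :
    ((r:ℂ) * x) ^ ((1:ℂ)/2) = (Real.sqrt r : ℂ) * x ^ ((1:ℂ)/2) := by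
  rcases hr.lt_or_eq with h | h
  · have hx0 : x ≠ 0 := fun h0 => by simp [h0] at hx
    have hrx : ((r:ℂ) * x) ≠ 0 := by
      simp [Complex.ofReal_ne_zero, ne_of_gt h, hx0]
    have him : ((r:ℂ) * x).im ≠ 0 := by
      simp only [Complex.mul_im, Complex.ofReal_re, Complex.ofReal_im, zero_mul, add_zero]
      exact mul_ne_zero (ne_of_gt h) hx
    apply sqrt_eq_of_sq_eq
    · rw [sqrt_sq hrx]
      have : ((Real.sqrt r : ℂ)) * (Real.sqrt r : ℂ) = (r:ℂ) := by
        rw [← Complex.ofReal_mul, Real.mul_self_sqrt hr]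
      calc (r:ℂ) * x = ((Real.sqrt r : ℂ) * (Real.sqrt r : ℂ)) * (x ^ ((1:ℂ)/2) * x ^ ((1:ℂ)/2)) := by
            rw [this, sqrt_sq hx0]
        _ = (Real.sqrt r : ℂ) * x ^ ((1:ℂ)/2) * ((Real.sqrt r : ℂ) * x ^ ((1:ℂ)/2)) := by ring
    · exact sqrt_re_pos him
    · have : 0 < (x ^ ((1:ℂ)/2)).re := sqrt_re_pos hx
      have hs : 0 < Real.sqrt r := Real.sqrt_pos.mpr h
      simp only [Complex.mul_re, Complex.ofReal_re, Complex.ofReal_im, zero_mul, sub_zero]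
      positivity
  · subst h
    simp [Real.sqrt_zero, Complex.zero_cpow half_ne_zero']

section FTC
variable {w : ℂ}

lemma gamma_im (hw : 0 < w.im) (t : ℝ) : (w + (t:ℂ) * (1 - w)).im = (1 - t) * w.im := by
  simp [Complex.add_im, Complex.mul_im, Complex.sub_im, Complex.sub_re,
    Complex.ofReal_re, Complex.ofReal_im, Complex.one_im, Complex.one_re]
  ring

lemma gamma_im_pos (hw : 0 < w.im) {t : ℝ} (ht : t < 1) : 0 < (w + (t:ℂ) * (1 - w)).im := by
  rw [gamma_im hw]; exact mul_pos (by linarith) hw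

lemma one_sub_gamma (t : ℝ) : 1 - (w + (t:ℂ) * (1 - w)) = ((1 - t : ℝ) : ℂ) * (1 - w) := by
  push_cast; ring

lemma hasDerivAt_G (hw : 0 < w.im) {t : ℝ} (ht : t ∈ Set.Ioo (0:ℝ) 1) :
    HasDerivAt (fun t : ℝ => Complex.I * Complex.log (hAux (w + (t:ℂ) * (1 - w))))
      ((1 - w) * ((1 - (w + (t:ℂ) * (1 - w))) ^ ((1:ℂ)/2) *
        (1 + (w + (t:ℂ) * (1 - w))) ^ ((1:ℂ)/2))⁻¹) t := by
  have him : 0 < (w + (t:ℂ) * (1 - w)).im := gamma_im_pos hw ht.2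
  have hc : HasDerivAt (fun s : ℂ => w + s * (1 - w)) (1 - w) (t:ℂ) := by
    simpa using ((hasDerivAt_id ((t:ℂ))).mul_const (1 - w)).const_add w
  have hcomp := ((hasDerivAt_key him).comp ((t:ℂ)) hc).comp_ofReal
  simpa [Function.comp, mul_comm] using hcomp

end FTC

section Cont
variable {w : ℂ}

lemma contAt_sqrt_zero : ContinuousAt (fun x : ℂ => x ^ ((1:ℂ)/2)) 0 := by
  have h : ContinuousAt (fun p : ℂ × ℂ => p.1 ^ p.2) (0, (1:ℂ)/2) :=
    Complex.continuousAt_cpow_zero_of_re_pos (by norm_num)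
  have h2 : ContinuousAt (fun x : ℂ => (x, (1:ℂ)/2)) 0 := continuousAt_id.prodMk continuousAt_const
  exact ContinuousAt.comp (x := (0:ℂ)) h h2

lemma contOn_B (hw : 0 < w.im) :
    ContinuousOn (fun t : ℝ => (1 + (w + (t:ℂ) * (1 - w))) ^ ((1:ℂ)/2)) (Set.Icc 0 1) := by
  intro t ht
  apply ContinuousAt.continuousWithinAt
  have hbase : ContinuousAt (fun t : ℝ => 1 + (w + (t:ℂ) * (1 - w))) t := by fun_prop
  apply ContinuousAt.cpow hbase continuousAt_const
  rcases lt_or_eq_of_le ht.2 with h | h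
  · exact Complex.mem_slitPlane_iff.mpr (Or.inr (by
      have := gamma_im_pos hw h
      simp only [Complex.add_im, Complex.one_im, zero_add]
      exact this.ne'))
  · subst h
    refine Complex.mem_slitPlane_iff.mpr (Or.inl ?_)
    have : (1:ℂ) + (w + (1:ℝ) * (1 - w)) = 2 := by push_cast; ring
    rw [this]; norm_num

lemma contOn_A (hw : 0 < w.im) :
    ContinuousOn (fun t : ℝ => (1 - (w + (t:ℂ) * (1 - w))) ^ ((1:ℂ)/2)) (Set.Icc 0 1) := by
  intro t ht
  apply ContinuousAt.continuousWithinAt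
  have hbase : ContinuousAt (fun t : ℝ => 1 - (w + (t:ℂ) * (1 - w))) t := by fun_prop
  rcases lt_or_eq_of_le ht.2 with h | h
  · apply ContinuousAt.cpow hbase continuousAt_const
    refine Complex.mem_slitPlane_iff.mpr (Or.inr ?_)
    have := gamma_im_pos hw h
    simp only [Complex.sub_im, Complex.one_im, zero_sub]
    exact (neg_ne_zero.mpr this.ne')
  · subst h
    have h0 : 1 - (w + ((1:ℝ):ℂ) * (1 - w)) = 0 := by push_cast; ring
    have hg : ContinuousAt (fun x : ℂ => x ^ ((1:ℂ)/2))
        ((fun t : ℝ => 1 - (w + (t:ℂ) * (1 - w))) 1) := by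
      simp only [h0]; exact contAt_sqrt_zero
    exact ContinuousAt.comp (x := (1:ℝ)) hg hbase

lemma contOn_G (hw : 0 < w.im) :
    ContinuousOn (fun t : ℝ => Complex.I * Complex.log (hAux (w + (t:ℂ) * (1 - w)))) (Set.Icc 0 1) := by
  have hA := contOn_A hw
  have hB := contOn_B hw
  have hγ : ContinuousOn (fun t : ℝ => w + (t:ℂ) * (1 - w)) (Set.Icc 0 1) := by fun_prop
  have hh : ContinuousOn (fun t : ℝ => hAux (w + (t:ℂ) * (1 - w))) (Set.Icc 0 1) := by
    simp only [hAux]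
    exact hγ.add (continuousOn_const.mul (hA.mul hB))
  apply ContinuousOn.mul continuousOn_const
  intro t ht
  have hmem : hAux (w + (t:ℂ) * (1 - w)) ∈ Complex.slitPlane := by
    rcases lt_or_eq_of_le ht.2 with h | h
    · exact hAux_slit (gamma_im_pos hw h)
    · subst h
      have h1 : w + ((1:ℝ):ℂ) * (1 - w) = 1 := by push_cast; ring
      rw [h1]
      have : hAux 1 = 1 := by
        simp [hAux, Complex.zero_cpow half_ne_zero']
      rw [this]
      exact Complex.mem_slitPlane_iff.mpr (Or.inl (by norm_num))
  exact ContinuousAt.comp_continuousWithinAt (x := t) (continuousAt_clog hmem) (hh t ht)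

end Cont

section Integrability
variable {w : ℂ}

lemma B_ne_zero (hw : 0 < w.im) {t : ℝ} (ht : t ∈ Set.Icc (0:ℝ) 1) :
    (1 + (w + (t:ℂ) * (1 - w))) ^ ((1:ℂ)/2) ≠ 0 := by
  apply sqrt_ne_zero
  rcases lt_or_eq_of_le ht.2 with h | h
  · intro h0
    have := gamma_im_pos hw h
    have : (1 + (w + (t:ℂ) * (1 - w))).im ≠ 0 := by
      simp only [Complex.add_im, Complex.one_im, zero_add]; exact this.ne'
    rw [h0] at this; simp at this
  · subst h
    have : (1:ℂ) + (w + ((1:ℝ):ℂ) * (1 - w)) = 2 := by push_cast; ring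
    rw [this]; norm_num

lemma exists_B_lower_bound (hw : 0 < w.im) :
    ∃ m > 0, ∀ t ∈ Set.Icc (0:ℝ) 1, m ≤ ‖(1 + (w + (t:ℂ) * (1 - w))) ^ ((1:ℂ)/2)‖ := by
  have hc : ContinuousOn (fun t : ℝ => ‖(1 + (w + (t:ℂ) * (1 - w))) ^ ((1:ℂ)/2)‖)
      (Set.Icc 0 1) := continuous_norm.comp_continuousOn (contOn_B hw)
  obtain ⟨x, hx, hmin⟩ := isCompact_Icc.exists_isMinOn (Set.nonempty_Icc.mpr zero_le_one) hc
  refine ⟨_, ?_, hmin⟩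
  exact norm_pos_iff.mpr (B_ne_zero hw hx)

lemma integrable_integrand (hw : 0 < w.im) :
    IntervalIntegrable (fun t : ℝ => (1 - w) * ((1 - (w + (t:ℂ) * (1 - w))) ^ ((1:ℂ)/2) *
      (1 + (w + (t:ℂ) * (1 - w))) ^ ((1:ℂ)/2))⁻¹) MeasureTheory.volume 0 1 := by
  obtain ⟨m, hm, hmle⟩ := exists_B_lower_bound hw
  have hw1 : (1 - w) ≠ 0 := fun h => by
    have : (1-w).im = 0 := by rw [h]; simp
    simp [Complex.sub_im] at this; linarith
  set aw : ℝ := ‖(1 - w) ^ ((1:ℂ)/2)‖ with haw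
  have haw_pos : 0 < aw := norm_pos_iff.mpr (sqrt_ne_zero hw1)
  set C : ℝ := ‖1 - w‖ / (aw * m) with hC
  have hC_pos : 0 < C := div_pos (norm_pos_iff.mpr hw1) (mul_pos haw_pos hm)
  -- the dominating function
  have hbound_int : IntervalIntegrable (fun t : ℝ => C * (1 - t) ^ (-(1/2) : ℝ))
      MeasureTheory.volume 0 1 := by
    have h1 : IntervalIntegrable (fun x : ℝ => x ^ (-(1/2) : ℝ)) MeasureTheory.volume 1 0 :=
      intervalIntegral.intervalIntegrable_rpow' (by norm_num)
    have h2 := h1.comp_sub_left 1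
    simpa using h2.const_mul C
  apply hbound_int.mono_fun
  · -- a.e. strong measurability on uIoc
    rw [Set.uIoc_of_le (zero_le_one : (0:ℝ) ≤ 1)]
    rw [← MeasureTheory.Measure.restrict_congr_set MeasureTheory.Ioo_ae_eq_Ioc]
    apply ContinuousOn.aestronglyMeasurable _ measurableSet_Ioo
    refine continuousOn_const.mul ((((contOn_A hw).mono Set.Ioo_subset_Icc_self).mul
      ((contOn_B hw).mono Set.Ioo_subset_Icc_self)).inv₀ (fun x hx => ?_))
    exact mul_ne_zero (sqrt_ne_zero (fun h0 => by
        have := gamma_im_pos hw hx.2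
        have h1 : (1 - (w + (x:ℂ) * (1 - w))).im ≠ 0 := by
          simp only [Complex.sub_im, Complex.one_im, zero_sub]
          exact neg_ne_zero.mpr this.ne'
        rw [h0] at h1; simp at h1)) (B_ne_zero hw ⟨hx.1.le, hx.2.le⟩)
  · -- the bound
    rw [Set.uIoc_of_le (zero_le_one : (0:ℝ) ≤ 1)]
    rw [Filter.EventuallyLE, MeasureTheory.ae_restrict_iff' measurableSet_Ioc]
    filter_upwards with t ht
    have ht1 : t ≤ 1 := ht.2
    have h1t : (0:ℝ) ≤ 1 - t := by linarith
    -- rewrite A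
    have hA : (1 - (w + (t:ℂ) * (1 - w))) ^ ((1:ℂ)/2)
        = ((Real.sqrt (1 - t) : ℂ)) * (1 - w) ^ ((1:ℂ)/2) := by
      rw [one_sub_gamma, ofReal_mul_sqrt h1t (by simp [Complex.sub_im]; linarith)]
    have hrpow : (1 - t) ^ (-(1/2) : ℝ) = (Real.sqrt (1 - t))⁻¹ := by
      rw [Real.rpow_neg h1t, Real.sqrt_eq_rpow]
    simp only [norm_mul, norm_inv, map_mul, hA, Real.norm_eq_abs]
    rw [Complex.norm_real, Real.norm_eq_abs, _root_.abs_of_nonneg (Real.sqrt_nonneg _), _root_.abs_of_nonneg hC_pos.le,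
      _root_.abs_of_nonneg (Real.rpow_nonneg h1t _), hrpow, hC]
    set B := ‖(1 + (w + (t:ℂ) * (1 - w))) ^ ((1:ℂ)/2)‖ with hB
    have hBm : m ≤ B := hmle t ⟨ht.1.le, ht.2⟩
    have hB_pos : 0 < B := lt_of_lt_of_le hm hBm
    rcases eq_or_lt_of_le h1t with h | h
    · rw [← h]; simp
    · have hs : 0 < Real.sqrt (1 - t) := Real.sqrt_pos.mpr h
      have hb : B⁻¹ ≤ m⁻¹ := inv_anti₀ hm hBm
      have hnn : (0:ℝ) ≤ (Real.sqrt (1-t))⁻¹ * aw⁻¹ :=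
        mul_nonneg (inv_nonneg.mpr hs.le) (inv_nonneg.mpr haw_pos.le)
      have hgoal : ‖1 - w‖ * ((Real.sqrt (1 - t))⁻¹ * aw⁻¹ * B⁻¹)
          ≤ ‖1 - w‖ / (aw * m) * (Real.sqrt (1 - t))⁻¹ := by
        rw [div_eq_mul_inv, mul_inv]
        calc ‖1 - w‖ * ((Real.sqrt (1 - t))⁻¹ * aw⁻¹ * B⁻¹)
            ≤ ‖1 - w‖ * ((Real.sqrt (1 - t))⁻¹ * aw⁻¹ * m⁻¹) := by
              apply mul_le_mul_of_nonneg_left _ (norm_nonneg _)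
              exact mul_le_mul_of_nonneg_left hb hnn
          _ = ‖1 - w‖ * (aw⁻¹ * m⁻¹) * (Real.sqrt (1 - t))⁻¹ := by ring
      simpa [haw, one_div, mul_inv, mul_comm, mul_left_comm, mul_assoc] using hgoal

end Integrability

lemma sqrt_eq_of_sq_eq_im {a b : ℂ} (h : a * a = b * b) (ha : 0 < a.im) (hb : 0 < b.im) :
    a = b := by
  have h0 : (a - b) * (a + b) = 0 := by linear_combination h
  rcases mul_eq_zero.mp h0 with h1 | h1
  · exact sub_eq_zero.mp h1
  · exfalso
    have : (a + b).im = 0 := by rw [h1]; simp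
    simp [Complex.add_im] at this; linarith

lemma arccos_val {w : ℂ} (hw : 0 < w.im) :
    arccosC w = -(Complex.I * Complex.log (hAux w)) := by
  have hFTC := intervalIntegral.integral_eq_sub_of_hasDeriv_right_of_le zero_le_one
    (contOn_G hw) (fun t ht => (hasDerivAt_G hw ht).hasDerivWithinAt) (integrable_integrand hw)
  rw [arccosC, ← intervalIntegral.integral_const_mul, hFTC]
  have h1 : w + ((1:ℝ):ℂ) * (1 - w) = 1 := by push_cast; ring
  have h0 : w + ((0:ℝ):ℂ) * (1 - w) = w := by push_cast; ring
  simp only [h1, h0]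
  have : hAux 1 = 1 := by simp [hAux, Complex.zero_cpow half_ne_zero']
  rw [this, Complex.log_one]
  ring

/-- for `z` in the upper half-plane,
`φ(z) = e^{i arccos(2z - 1)}`. -/
theorem phiMap_eq_exp_arccos (z : ℂ) (hz : 0 < z.im) :
    phiMap z = Complex.exp (Complex.I * arccosC (2 * z - 1)) := by
  have hw : 0 < (2 * z - 1).im := by
    simp only [Complex.sub_im, Complex.mul_im, Complex.one_im, Complex.im_ofNat,
      Complex.re_ofNat]
    simp; linarith
  rw [arccos_val hw]
  have hlog : Complex.I * -(Complex.I * Complex.log (hAux (2*z-1))) = Complex.log (hAux (2*z-1)) := by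
    linear_combination (-(Complex.log (hAux (2*z-1)))) * Complex.I_mul_I
  rw [hlog, Complex.exp_log (hAux_ne_zero hw)]
  -- final algebra
  have hz0 : z ≠ 0 := fun h => by rw [h] at hz; simp at hz
  have hz1 : z - 1 ≠ 0 := fun h => by
    have : (z - 1).im = 0 := by rw [h]; simp
    simp [Complex.sub_im] at this; linarith
  have h2z : (2:ℂ) * z ≠ 0 := by simp [hz0]
  have h22z : (2:ℂ) - 2*z ≠ 0 := fun h => by
    have : ((2:ℂ) - 2*z).im = 0 := by rw [h]; simp
    simp [Complex.sub_im, Complex.mul_im] at this; linarith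
  have him2z : 0 < ((2:ℂ)*z).im := by simp [Complex.mul_im]; linarith
  have him22z : ((2:ℂ) - 2*z).im < 0 := by simp [Complex.sub_im, Complex.mul_im]; linarith
  have himz1 : 0 < (z - 1).im := by simp [Complex.sub_im]; linarith
  set p : ℂ := ((2:ℂ) - 2*z) ^ ((1:ℂ)/2) with hp
  set q : ℂ := ((2:ℂ)*z) ^ ((1:ℂ)/2) with hq
  set x : ℂ := z ^ ((1:ℂ)/2) with hx
  set y : ℂ := (z - 1) ^ ((1:ℂ)/2) with hy
  have key : Complex.I * (p * q) = 2 * x * y := by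
    apply sqrt_eq_of_sq_eq_im
    · have e1 : p * p = 2 - 2*z := sqrt_sq h22z
      have e2 : q * q = 2*z := sqrt_sq h2z
      have e3 : x * x = z := sqrt_sq hz0
      have e4 : y * y = z - 1 := sqrt_sq hz1
      linear_combination (p*p*q*q) * Complex.I_mul_I - (q*q) * e1 - (2-2*z) * e2
        - (4*y*y) * e3 - (4*z) * e4
    · -- im (I * (p*q)) = re (p*q) > 0
      have hp_re : 0 < p.re := sqrt_re_pos him22z.ne
      have hp_im : p.im < 0 := sqrt_im_neg him22z
      have hq_re : 0 < q.re := sqrt_re_pos him2z.ne'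
      have hq_im : 0 < q.im := sqrt_im_pos him2z
      simp only [Complex.mul_im, Complex.I_re, Complex.I_im, zero_mul, one_mul, Complex.mul_re]
      nlinarith
    · have hx_re : 0 < x.re := sqrt_re_pos hz.ne'
      have hx_im : 0 < x.im := sqrt_im_pos hz
      have hy_re : 0 < y.re := sqrt_re_pos himz1.ne'
      have hy_im : 0 < y.im := sqrt_im_pos himz1
      simp only [Complex.mul_im, Complex.mul_re, Complex.re_ofNat, Complex.im_ofNat]
      nlinarith
  have hone : (1:ℂ) - (2*z - 1) = 2 - 2*z := by ring
  have htwo : (1:ℂ) + (2*z - 1) = 2*z := by ring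
  rw [phiMap, hAux, hone, htwo, ← hp, ← hq, ← hx, ← hy]
  rw [key]
  ring
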